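/- Let s ∈ (0,1), q > 1 with sq < 1, and Ω ⊂ ℝ^N bounded with C^{1,1} boundary. Then the function d_Ω^s belongs to W^{s,q}(Ω'), for any bounded open Ω' ⊇ Ω; more precisely ∫_{Ω'×Ω'} |d_Ω(x)^s − d_Ω(y)^s|^q / |x−y|^{N+sq} dx dy < ∞. -/

import Mathlib

open MeasureTheory Metric

namespace Stmt18Aux

open Set Module

/-! ### Real-number inequalities -/

lemma bernoulli_le {s u : ℝ} (hs0 : 0 ≤ s) (hs1 : s ≤ 1) (hu : 1 ≤ u) :
    u ^ s ≤ 1 + s * (u - 1) := by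
  have h := Real.geom_mean_le_arith_mean2_weighted (w₁ := s) (w₂ := 1 - s) (p₁ := u)
      (p₂ := 1) hs0 (by linarith) (le_trans zero_le_one hu) zero_le_one (by ring)
  rw [Real.one_rpow, mul_one] at h
  linarith

lemma concave_bound {s a b : ℝ} (hs0 : 0 < s) (hs1 : s < 1) (hb : 0 < b) (hab : b ≤ a) :
    a ^ s - b ^ s ≤ s * b ^ (s - 1) * (a - b) := by
  have ha : 0 < a := lt_of_lt_of_le hb hab
  have hu : 1 ≤ a / b := (one_le_div hb).2 hab
  have h := bernoulli_le hs0.le hs1.le hu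
  rw [Real.div_rpow ha.le hb.le] at h
  have hbs : 0 < b ^ s := Real.rpow_pos_of_pos hb s
  have h2 : a ^ s ≤ (1 + s * (a / b - 1)) * b ^ s := (div_le_iff₀ hbs).1 h
  have h3 : (1 + s * (a / b - 1)) * b ^ s = b ^ s + s * b ^ (s - 1) * (a - b) := by
    rw [Real.rpow_sub_one hb.ne']
    field_simp
  linarith

lemma rpow_add_le {p a b : ℝ} (ha : 0 ≤ a) (hb : 0 ≤ b) (hp0 : 0 ≤ p) (hp1 : p ≤ 1) :
    (a + b) ^ p ≤ a ^ p + b ^ p := by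
  have h := NNReal.rpow_add_le_add_rpow a.toNNReal b.toNNReal hp0 hp1
  have h' := NNReal.coe_le_coe.2 h
  rw [NNReal.coe_rpow, NNReal.coe_add, NNReal.coe_add, NNReal.coe_rpow, NNReal.coe_rpow,
    Real.coe_toNNReal a ha, Real.coe_toNNReal b hb] at h'
  exact h'

lemma holder_bound {s a b : ℝ} (hs0 : 0 ≤ s) (hs1 : s ≤ 1) (hb : 0 ≤ b) (hab : b ≤ a) :
    a ^ s - b ^ s ≤ (a - b) ^ s := by
  have h : a ^ s ≤ (a - b) ^ s + b ^ s := by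
    have := rpow_add_le (by linarith : (0:ℝ) ≤ a - b) hb hs0 hs1
    rwa [sub_add_cancel] at this
  linarith

/-! ### Radial integrals -/

variable {N : ℕ}

lemma scale_lintegral (x : EuclideanSpace ℝ (Fin N)) {R : ℝ} (hR : 0 < R) (t : ℝ)
    {S : Set (EuclideanSpace ℝ (Fin N))} (hS : MeasurableSet S) :
    ∫⁻ y in S, ENNReal.ofReal (dist y x ^ t) ∂volume
      = ENNReal.ofReal (R ^ N) * (ENNReal.ofReal (R ^ t) *
          ∫⁻ z in (fun z : EuclideanSpace ℝ (Fin N) => x + R • z) ⁻¹' S,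
            ENNReal.ofReal (‖z‖ ^ t) ∂volume) := by
  set T : EuclideanSpace ℝ (Fin N) → EuclideanSpace ℝ (Fin N) := fun z => x + R • z with hTdef
  have hTm : Measurable T := (measurable_const_smul R).const_add x
  have hfm : Measurable fun y : EuclideanSpace ℝ (Fin N) => ENNReal.ofReal (dist y x ^ t) :=
    ((continuous_id.dist continuous_const).measurable.pow measurable_const).ennreal_ofReal
  have hRN : (0:ℝ) < R ^ N := pow_pos hR N
  have hmap : Measure.map T volume = ENNReal.ofReal ((R ^ N)⁻¹) • volume := by
    have h1 : Measure.map (fun z : EuclideanSpace ℝ (Fin N) => R • z) volume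
        = ENNReal.ofReal |(R ^ finrank ℝ (EuclideanSpace ℝ (Fin N)))⁻¹| • volume :=
      Measure.map_addHaar_smul volume hR.ne'
    have h2 : T = (fun y => x + y) ∘ (fun z : EuclideanSpace ℝ (Fin N) => R • z) := rfl
    rw [h2, ← Measure.map_map (measurable_const_add x) (measurable_const_smul R), h1,
      Measure.map_smul, map_add_left_eq_self, finrank_euclideanSpace_fin,
      abs_of_pos (by positivity)]
  have hvol : (volume : Measure (EuclideanSpace ℝ (Fin N)))
      = ENNReal.ofReal (R ^ N) • Measure.map T volume := by
    rw [hmap, smul_smul, ← ENNReal.ofReal_mul hRN.le, mul_inv_cancel₀ hRN.ne',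
      ENNReal.ofReal_one, one_smul]
  calc ∫⁻ y in S, ENNReal.ofReal (dist y x ^ t) ∂volume
      = ∫⁻ y in S, ENNReal.ofReal (dist y x ^ t)
          ∂(ENNReal.ofReal (R ^ N) • Measure.map T volume) := by rw [← hvol]
    _ = ENNReal.ofReal (R ^ N) *
          ∫⁻ y in S, ENNReal.ofReal (dist y x ^ t) ∂(Measure.map T volume) := by
        rw [Measure.restrict_smul, lintegral_smul_measure, smul_eq_mul]
    _ = ENNReal.ofReal (R ^ N) * ∫⁻ z in T ⁻¹' S, ENNReal.ofReal (dist (T z) x ^ t) ∂volume := by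
        rw [setLIntegral_map hS hfm hTm]
    _ = ENNReal.ofReal (R ^ N) * (ENNReal.ofReal (R ^ t) *
          ∫⁻ z in T ⁻¹' S, ENNReal.ofReal (‖z‖ ^ t) ∂volume) := by
        congr 1
        rw [← lintegral_const_mul' _ _ ENNReal.ofReal_ne_top]
        refine lintegral_congr fun z => ?_
        have hdist : dist (T z) x = R * ‖z‖ := by
          simp only [hTdef, dist_eq_norm, add_sub_cancel_left, norm_smul, Real.norm_eq_abs,
            abs_of_pos hR]
        rw [hdist, Real.mul_rpow hR.le (norm_nonneg z), ENNReal.ofReal_mul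
          (Real.rpow_nonneg hR.le t)]

lemma annulus_bound {a b t : ℝ} (ha : 0 < a) (ht : t ≤ 0) (hb : 0 ≤ b) :
    ∫⁻ z in ({z : EuclideanSpace ℝ (Fin N) | a < ‖z‖} ∩ closedBall 0 b),
        ENNReal.ofReal (‖z‖ ^ t)
      ≤ ENNReal.ofReal (a ^ t) * (ENNReal.ofReal (b ^ (N:ℝ)) *
          volume (closedBall (0 : EuclideanSpace ℝ (Fin N)) 1)) := by
  have hm : MeasurableSet ({z : EuclideanSpace ℝ (Fin N) | a < ‖z‖} ∩ closedBall 0 b) :=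
    ((isOpen_lt continuous_const continuous_norm).measurableSet).inter measurableSet_closedBall
  calc ∫⁻ z in ({z : EuclideanSpace ℝ (Fin N) | a < ‖z‖} ∩ closedBall 0 b),
        ENNReal.ofReal (‖z‖ ^ t)
      ≤ ∫⁻ _ in ({z : EuclideanSpace ℝ (Fin N) | a < ‖z‖} ∩ closedBall 0 b),
          ENNReal.ofReal (a ^ t) := by
        refine setLIntegral_mono' hm fun z hz => ?_
        exact ENNReal.ofReal_le_ofReal (Real.rpow_le_rpow_of_nonpos ha hz.1.le ht)
    _ = ENNReal.ofReal (a ^ t) *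
          volume ({z : EuclideanSpace ℝ (Fin N) | a < ‖z‖} ∩ closedBall 0 b) :=
        setLIntegral_const _ _
    _ ≤ ENNReal.ofReal (a ^ t) * volume (closedBall (0 : EuclideanSpace ℝ (Fin N)) b) :=
        mul_le_mul_of_nonneg_left
          (measure_mono (μ := (volume : Measure (EuclideanSpace ℝ (Fin N)))) inter_subset_right) zero_le
    _ = ENNReal.ofReal (a ^ t) * (ENNReal.ofReal (b ^ (N:ℝ)) *
          volume (closedBall (0 : EuclideanSpace ℝ (Fin N)) 1)) := by
        rw [Measure.addHaar_closedBall' volume _ hb, finrank_euclideanSpace_fin,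
          ← Real.rpow_natCast b N]

lemma finite_ball (hN : 0 < N) {t : ℝ} (ht : -(N:ℝ) < t) :
    ∫⁻ z in closedBall (0 : EuclideanSpace ℝ (Fin N)) 1, ENNReal.ofReal (‖z‖ ^ t) < ⊤ := by
  set V := volume (closedBall (0 : EuclideanSpace ℝ (Fin N)) 1) with hV
  have hVfin : V ≠ ⊤ := measure_closedBall_lt_top.ne
  rcases le_or_gt 0 t with ht0 | ht0
  · -- easy case : bounded integrand
    calc ∫⁻ z in closedBall (0 : EuclideanSpace ℝ (Fin N)) 1, ENNReal.ofReal (‖z‖ ^ t)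
        ≤ ∫⁻ _ in closedBall (0 : EuclideanSpace ℝ (Fin N)) 1, ENNReal.ofReal 1 := by
          refine setLIntegral_mono' measurableSet_closedBall fun z hz => ?_
          refine ENNReal.ofReal_le_ofReal (Real.rpow_le_one (norm_nonneg z) ?_ ht0)
          simpa [dist_zero_right] using (mem_closedBall.1 hz)
      _ = ENNReal.ofReal 1 * V := setLIntegral_const _ _
      _ < ⊤ := ENNReal.mul_lt_top ENNReal.ofReal_lt_top hVfin.lt_top
  · -- annuli
    set S : ℕ → Set (EuclideanSpace ℝ (Fin N)) := fun k =>
      {z | ((2:ℝ) ^ (k+1))⁻¹ < ‖z‖} ∩ closedBall 0 (((2:ℝ) ^ k)⁻¹) with hSdef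
    have hcover : closedBall (0 : EuclideanSpace ℝ (Fin N)) 1 ⊆ {0} ∪ ⋃ k, S k := by
      intro z hz
      rcases eq_or_ne z 0 with rfl | hz0
      · exact Or.inl rfl
      · refine Or.inr ?_
        have hd : 0 < ‖z‖ := norm_pos_iff.2 hz0
        have hd1 : ‖z‖ ≤ 1 := by simpa [dist_zero_right] using (mem_closedBall.1 hz)
        have hex : ∃ k : ℕ, ((2:ℝ) ^ (k+1))⁻¹ < ‖z‖ := by
          obtain ⟨n, hn⟩ := pow_unbounded_of_one_lt (‖z‖⁻¹) (one_lt_two (α := ℝ))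
          refine ⟨n, ?_⟩
          have h2 : (‖z‖)⁻¹ < (2:ℝ) ^ (n+1) :=
            lt_of_lt_of_le hn (pow_le_pow_right₀ one_le_two (Nat.le_succ n))
          have := (inv_lt_inv₀ (by positivity) (inv_pos.2 hd)).2 h2
          simpa [inv_inv] using this
        set k₀ := Nat.find hex with hk₀
        refine mem_iUnion.2 ⟨k₀, Nat.find_spec hex, ?_⟩
        simp only [mem_closedBall, dist_zero_right]
        rcases Nat.eq_zero_or_pos k₀ with h0 | hpos
        · rw [h0]; simpa using hd1
        · obtain ⟨m, hm⟩ := Nat.exists_eq_succ_of_ne_zero hpos.ne'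
          have hmin := Nat.find_min hex (m := m) (by omega)
          push_neg at hmin
          rw [hm]
          simpa [Nat.succ_eq_add_one] using hmin
    have hterm : ∀ k : ℕ, ∫⁻ z in S k, ENNReal.ofReal (‖z‖ ^ t)
        ≤ (ENNReal.ofReal ((2:ℝ) ^ (-t)) * V) * ENNReal.ofReal ((2:ℝ) ^ (-(t+(N:ℝ)))) ^ k := by
      intro k
      have h1 := annulus_bound (N := N) (a := ((2:ℝ) ^ (k+1))⁻¹) (b := ((2:ℝ) ^ k)⁻¹)
        (t := t) (by positivity) ht0.le (by positivity)
      have e1 : ∀ m : ℕ, ((2:ℝ) ^ m)⁻¹ = (2:ℝ) ^ (-(m:ℝ)) := by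
        intro m
        rw [← Real.rpow_natCast 2 m, ← Real.rpow_neg (by norm_num)]
      have e : ((2:ℝ) ^ (k+1))⁻¹ ^ t * ((2:ℝ) ^ k)⁻¹ ^ (N:ℝ)
          = (2:ℝ) ^ (-t) * ((2:ℝ) ^ (-(t+(N:ℝ)))) ^ k := by
        rw [e1, e1, ← Real.rpow_natCast ((2:ℝ) ^ (-(t+(N:ℝ)))) k,
          ← Real.rpow_mul (by norm_num : (0:ℝ) ≤ 2),
          ← Real.rpow_mul (by norm_num : (0:ℝ) ≤ 2),
          ← Real.rpow_mul (by norm_num : (0:ℝ) ≤ 2),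
          ← Real.rpow_add (by norm_num : (0:ℝ) < 2),
          ← Real.rpow_add (by norm_num : (0:ℝ) < 2)]
        congr 1
        push_cast
        ring
      refine h1.trans (le_of_eq ?_)
      calc ENNReal.ofReal (((2:ℝ) ^ (k+1))⁻¹ ^ t) *
            (ENNReal.ofReal (((2:ℝ) ^ k)⁻¹ ^ (N:ℝ)) * V)
          = ENNReal.ofReal (((2:ℝ) ^ (k+1))⁻¹ ^ t * ((2:ℝ) ^ k)⁻¹ ^ (N:ℝ)) * V := by
            rw [ENNReal.ofReal_mul (by positivity), mul_assoc]
        _ = ENNReal.ofReal ((2:ℝ) ^ (-t) * ((2:ℝ) ^ (-(t+(N:ℝ)))) ^ k) * V := by rw [e]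
        _ = (ENNReal.ofReal ((2:ℝ) ^ (-t)) * V) * ENNReal.ofReal ((2:ℝ) ^ (-(t+(N:ℝ)))) ^ k := by
            rw [ENNReal.ofReal_mul (by positivity), ENNReal.ofReal_pow (by positivity)]
            ring
    have hw : ENNReal.ofReal ((2:ℝ) ^ (-(t+(N:ℝ)))) < 1 := by
      rw [← ENNReal.ofReal_one]
      exact ENNReal.ofReal_lt_ofReal_iff_of_nonneg (by positivity) |>.2
        (Real.rpow_lt_one_of_one_lt_of_neg one_lt_two (by linarith))
    calc ∫⁻ z in closedBall (0 : EuclideanSpace ℝ (Fin N)) 1, ENNReal.ofReal (‖z‖ ^ t)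
        ≤ ∫⁻ z in ({0} ∪ ⋃ k, S k : Set (EuclideanSpace ℝ (Fin N))),
            ENNReal.ofReal (‖z‖ ^ t) := lintegral_mono_set hcover
      _ ≤ (∫⁻ z in ({0} : Set (EuclideanSpace ℝ (Fin N))), ENNReal.ofReal (‖z‖ ^ t))
            + ∫⁻ z in ⋃ k, S k, ENNReal.ofReal (‖z‖ ^ t) := lintegral_union_le _ _ _
      _ ≤ 0 + ∑' k, ∫⁻ z in S k, ENNReal.ofReal (‖z‖ ^ t) := by
          refine add_le_add ?_ (lintegral_iUnion_le _ _)
          have : ∫⁻ z in ({0} : Set (EuclideanSpace ℝ (Fin N))), ENNReal.ofReal (‖z‖ ^ t)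
              ≤ ∫⁻ _ in ({0} : Set (EuclideanSpace ℝ (Fin N))), 0 := by
            refine setLIntegral_mono' (measurableSet_singleton 0) fun z hz => ?_
            rcases hz with rfl
            simp [Real.zero_rpow ht0.ne]
          simpa using this
      _ ≤ 0 + ∑' k, (ENNReal.ofReal ((2:ℝ) ^ (-t)) * V) *
            ENNReal.ofReal ((2:ℝ) ^ (-(t+(N:ℝ)))) ^ k := by
          exact add_le_add le_rfl (ENNReal.tsum_le_tsum hterm)
      _ = (ENNReal.ofReal ((2:ℝ) ^ (-t)) * V) *
            (1 - ENNReal.ofReal ((2:ℝ) ^ (-(t+(N:ℝ)))))⁻¹ := by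
          rw [zero_add, ENNReal.tsum_mul_left, ENNReal.tsum_geometric]
      _ < ⊤ := by
          refine ENNReal.mul_lt_top (ENNReal.mul_lt_top ENNReal.ofReal_lt_top hVfin.lt_top) ?_
          exact ENNReal.inv_lt_top.2 (tsub_pos_of_lt hw)

lemma finite_compl {u : ℝ} (hu : u < -(N:ℝ)) :
    ∫⁻ z in (closedBall (0 : EuclideanSpace ℝ (Fin N)) 1)ᶜ, ENNReal.ofReal (‖z‖ ^ u) < ⊤ := by
  set V := volume (closedBall (0 : EuclideanSpace ℝ (Fin N)) 1) with hV
  have hVfin : V ≠ ⊤ := measure_closedBall_lt_top.ne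
  have hu0 : u < 0 := by
    have : (0:ℝ) ≤ (N:ℝ) := Nat.cast_nonneg N
    linarith
  set S : ℕ → Set (EuclideanSpace ℝ (Fin N)) := fun k =>
    {z | (2:ℝ) ^ k < ‖z‖} ∩ closedBall 0 ((2:ℝ) ^ (k+1)) with hSdef
  have hcover : (closedBall (0 : EuclideanSpace ℝ (Fin N)) 1)ᶜ ⊆ ⋃ k, S k := by
    intro z hz
    have hd1 : 1 < ‖z‖ := by
      have := mem_closedBall.not.1 hz
      simp only [dist_zero_right, not_le] at this
      exact this
    have hex : ∃ k : ℕ, ‖z‖ ≤ (2:ℝ) ^ (k+1) := by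
      obtain ⟨n, hn⟩ := pow_unbounded_of_one_lt (‖z‖) (one_lt_two (α := ℝ))
      exact ⟨n, le_trans hn.le (pow_le_pow_right₀ one_le_two (Nat.le_succ n))⟩
    set k₀ := Nat.find hex with hk₀
    refine mem_iUnion.2 ⟨k₀, ?_, by
      simpa [mem_closedBall, dist_zero_right] using Nat.find_spec hex⟩
    rcases Nat.eq_zero_or_pos k₀ with h0 | hpos
    · simpa [h0] using hd1
    · obtain ⟨m, hm⟩ := Nat.exists_eq_succ_of_ne_zero hpos.ne'
      have hmin := Nat.find_min hex (m := m) (by omega)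
      push_neg at hmin
      show (2:ℝ) ^ k₀ < ‖z‖
      rw [hm]
      simpa [Nat.succ_eq_add_one] using hmin
  have hterm : ∀ k : ℕ, ∫⁻ z in S k, ENNReal.ofReal (‖z‖ ^ u)
      ≤ (ENNReal.ofReal ((2:ℝ) ^ (N:ℝ)) * V) * ENNReal.ofReal ((2:ℝ) ^ (u+(N:ℝ))) ^ k := by
    intro k
    have h1 := annulus_bound (N := N) (a := (2:ℝ) ^ k) (b := (2:ℝ) ^ (k+1))
      (t := u) (by positivity) hu0.le (by positivity)
    have e : ((2:ℝ) ^ k) ^ u * ((2:ℝ) ^ (k+1)) ^ (N:ℝ)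
        = (2:ℝ) ^ (N:ℝ) * ((2:ℝ) ^ (u+(N:ℝ))) ^ k := by
      rw [← Real.rpow_natCast (2:ℝ) k, ← Real.rpow_natCast (2:ℝ) (k+1),
        ← Real.rpow_natCast ((2:ℝ) ^ (u+(N:ℝ))) k,
        ← Real.rpow_mul (by norm_num : (0:ℝ) ≤ 2),
        ← Real.rpow_mul (by norm_num : (0:ℝ) ≤ 2),
        ← Real.rpow_mul (by norm_num : (0:ℝ) ≤ 2),
        ← Real.rpow_add (by norm_num : (0:ℝ) < 2),
        ← Real.rpow_add (by norm_num : (0:ℝ) < 2)]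
      congr 1
      push_cast
      ring
    refine h1.trans (le_of_eq ?_)
    calc ENNReal.ofReal (((2:ℝ) ^ k) ^ u) * (ENNReal.ofReal (((2:ℝ) ^ (k+1)) ^ (N:ℝ)) * V)
        = ENNReal.ofReal (((2:ℝ) ^ k) ^ u * ((2:ℝ) ^ (k+1)) ^ (N:ℝ)) * V := by
          rw [ENNReal.ofReal_mul (by positivity), mul_assoc]
      _ = ENNReal.ofReal ((2:ℝ) ^ (N:ℝ) * ((2:ℝ) ^ (u+(N:ℝ))) ^ k) * V := by rw [e]
      _ = (ENNReal.ofReal ((2:ℝ) ^ (N:ℝ)) * V) * ENNReal.ofReal ((2:ℝ) ^ (u+(N:ℝ))) ^ k := by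
          rw [ENNReal.ofReal_mul (by positivity), ENNReal.ofReal_pow (by positivity)]
          ring
  have hw : ENNReal.ofReal ((2:ℝ) ^ (u+(N:ℝ))) < 1 := by
    rw [← ENNReal.ofReal_one]
    exact ENNReal.ofReal_lt_ofReal_iff_of_nonneg (by positivity) |>.2
      (Real.rpow_lt_one_of_one_lt_of_neg one_lt_two (by linarith))
  calc ∫⁻ z in (closedBall (0 : EuclideanSpace ℝ (Fin N)) 1)ᶜ, ENNReal.ofReal (‖z‖ ^ u)
      ≤ ∫⁻ z in ⋃ k, S k, ENNReal.ofReal (‖z‖ ^ u) := lintegral_mono_set hcover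
    _ ≤ ∑' k, ∫⁻ z in S k, ENNReal.ofReal (‖z‖ ^ u) := lintegral_iUnion_le _ _
    _ ≤ ∑' k, (ENNReal.ofReal ((2:ℝ) ^ (N:ℝ)) * V) * ENNReal.ofReal ((2:ℝ) ^ (u+(N:ℝ))) ^ k :=
        ENNReal.tsum_le_tsum hterm
    _ = (ENNReal.ofReal ((2:ℝ) ^ (N:ℝ)) * V) *
          (1 - ENNReal.ofReal ((2:ℝ) ^ (u+(N:ℝ))))⁻¹ := by
        rw [ENNReal.tsum_mul_left, ENNReal.tsum_geometric]
    _ < ⊤ := by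
        refine ENNReal.mul_lt_top (ENNReal.mul_lt_top ENNReal.ofReal_lt_top hVfin.lt_top) ?_
        exact ENNReal.inv_lt_top.2 (tsub_pos_of_lt hw)

lemma lint_ball_le (hN : 0 < N) {t : ℝ} (ht : -(N:ℝ) < t) :
    ∃ C : ENNReal, C ≠ ⊤ ∧ ∀ (x : EuclideanSpace ℝ (Fin N)) {R : ℝ}, 0 < R →
      ∫⁻ y in closedBall x R, ENNReal.ofReal (dist y x ^ t)
        ≤ C * ENNReal.ofReal (R ^ (t + N)) := by
  refine ⟨∫⁻ z in closedBall (0 : EuclideanSpace ℝ (Fin N)) 1, ENNReal.ofReal (‖z‖ ^ t),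
    (finite_ball hN ht).ne, fun x R hR => ?_⟩
  rw [scale_lintegral x hR t measurableSet_closedBall]
  have hpre : (fun z : EuclideanSpace ℝ (Fin N) => x + R • z) ⁻¹' closedBall x R
      = closedBall (0 : EuclideanSpace ℝ (Fin N)) 1 := by
    ext z
    simp only [mem_preimage, mem_closedBall, dist_eq_norm, add_sub_cancel_left, norm_smul,
      Real.norm_eq_abs, abs_of_pos hR, dist_zero_right, sub_zero]
    rw [mul_le_iff_le_one_right hR]
  rw [hpre, ← mul_assoc, ← ENNReal.ofReal_mul (by positivity), mul_comm]
  refine le_of_eq ?_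
  congr 1
  rw [Real.rpow_add hR, Real.rpow_natCast]
  ring

lemma lint_compl_le (hN : 0 < N) {u : ℝ} (hu : u < -(N:ℝ)) :
    ∃ C : ENNReal, C ≠ ⊤ ∧ ∀ (x : EuclideanSpace ℝ (Fin N)) {R : ℝ}, 0 < R →
      ∫⁻ y in (closedBall x R)ᶜ, ENNReal.ofReal (dist y x ^ u)
        ≤ C * ENNReal.ofReal (R ^ (u + N)) := by
  refine ⟨∫⁻ z in (closedBall (0 : EuclideanSpace ℝ (Fin N)) 1)ᶜ, ENNReal.ofReal (‖z‖ ^ u),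
    (finite_compl hu).ne, fun x R hR => ?_⟩
  rw [scale_lintegral x hR u measurableSet_closedBall.compl]
  have hpre : (fun z : EuclideanSpace ℝ (Fin N) => x + R • z) ⁻¹' (closedBall x R)ᶜ
      = (closedBall (0 : EuclideanSpace ℝ (Fin N)) 1)ᶜ := by
    rw [preimage_compl]
    congr 1
    ext z
    simp only [mem_preimage, mem_closedBall, dist_eq_norm, add_sub_cancel_left, norm_smul,
      Real.norm_eq_abs, abs_of_pos hR, dist_zero_right, sub_zero]
    rw [mul_le_iff_le_one_right hR]
  rw [hpre, ← mul_assoc, ← ENNReal.ofReal_mul (by positivity), mul_comm]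
  refine le_of_eq ?_
  congr 1
  rw [Real.rpow_add hR, Real.rpow_natCast]
  ring

/-! ### The dominating kernel -/

noncomputable def G (N : ℕ) (s q : ℝ) (Ω : Set (EuclideanSpace ℝ (Fin N)))
    (x y : EuclideanSpace ℝ (Fin N)) : ENNReal :=
  if 0 < infDist x Ωᶜ then
    (if dist y x ≤ infDist x Ωᶜ / 2 then
      ENNReal.ofReal ((s * 2 ^ (1-s)) ^ q * infDist x Ωᶜ ^ ((s-1)*q)
        * dist y x ^ (q - s*q - N))
     else
      ENNReal.ofReal (infDist x Ωᶜ ^ (s*q) * dist y x ^ (-(N:ℝ) - s*q)))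
  else 0

lemma pointwise_le {N : ℕ} {s q : ℝ} (hs0 : 0 < s) (hs1 : s < 1) (hq : 1 < q)
    (Ω : Set (EuclideanSpace ℝ (Fin N))) {x y : EuclideanSpace ℝ (Fin N)}
    (hxy : infDist y Ωᶜ ≤ infDist x Ωᶜ) :
    ENNReal.ofReal (|infDist x Ωᶜ ^ s - infDist y Ωᶜ ^ s| ^ q / dist x y ^ ((N:ℝ) + s*q))
      ≤ G N s q Ω x y := by
  have hq0 : (0:ℝ) < q := lt_trans one_pos hq
  set r := infDist x Ωᶜ with hr
  set e := infDist y Ωᶜ with he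
  have hr0 : 0 ≤ r := infDist_nonneg
  have he0 : 0 ≤ e := infDist_nonneg
  rw [dist_comm x y]
  by_cases hrpos : 0 < r
  · have hA : |r ^ s - e ^ s| = r ^ s - e ^ s :=
      abs_of_nonneg (sub_nonneg.2 (Real.rpow_le_rpow he0 hxy hs0.le))
    rw [G, if_pos hrpos]
    by_cases hd : dist y x ≤ r / 2
    · rw [if_pos hd]
      rcases eq_or_ne y x with rfl | hne
      · rw [dist_self]
        have hre : e = r := by rw [he, hr]
        rw [hre, sub_self, abs_zero, Real.zero_rpow hq0.ne', zero_div, ENNReal.ofReal_zero]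
        exact zero_le
      · have hdpos : 0 < dist y x := dist_pos.2 hne
        have hlip : r - e ≤ dist y x := by
          have h1 : infDist x Ωᶜ ≤ infDist y Ωᶜ + dist x y := infDist_le_infDist_add_dist
          rw [dist_comm x y] at h1
          linarith
        have hepos : r / 2 ≤ e := by linarith
        have he2 : 0 < e := lt_of_lt_of_le (by linarith) hepos
        have h1 : r ^ s - e ^ s ≤ s * e ^ (s-1) * (r - e) := concave_bound hs0 hs1 he2 hxy
        have h2 : e ^ (s-1) ≤ (r/2) ^ (s-1) :=
          Real.rpow_le_rpow_of_nonpos (by linarith) hepos (by linarith)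
        have h4 : (r/2) ^ (s-1) = 2 ^ (1-s) * r ^ (s-1) := by
          rw [div_eq_mul_inv, Real.mul_rpow hr0 (by norm_num),
            Real.inv_rpow (by norm_num : (0:ℝ) ≤ 2), ← Real.rpow_neg (by norm_num : (0:ℝ) ≤ 2)]
          have he' : -(s-1) = 1 - s := by ring
          rw [he', mul_comm]
        have h3 : r ^ s - e ^ s ≤ (s * 2 ^ (1-s)) * r ^ (s-1) * dist y x := by
          have hpos1 : 0 ≤ s * e ^ (s-1) := by positivity
          have step1 : s * e ^ (s-1) * (r - e) ≤ s * e ^ (s-1) * dist y x :=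
            mul_le_mul_of_nonneg_left hlip hpos1
          have step2 : s * e ^ (s-1) * dist y x ≤ s * ((r/2) ^ (s-1)) * dist y x := by
            have := mul_le_mul_of_nonneg_left h2 hs0.le
            exact mul_le_mul_of_nonneg_right this dist_nonneg
          calc r ^ s - e ^ s ≤ s * e ^ (s-1) * (r - e) := h1
            _ ≤ s * e ^ (s-1) * dist y x := step1
            _ ≤ s * ((r/2) ^ (s-1)) * dist y x := step2
            _ = (s * 2 ^ (1-s)) * r ^ (s-1) * dist y x := by rw [h4]; ring
        have hnum : |r ^ s - e ^ s| ^ q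
            ≤ (s * 2 ^ (1-s)) ^ q * r ^ ((s-1)*q) * (dist y x) ^ q := by
          have hb : 0 ≤ (s * 2 ^ (1-s)) * r ^ (s-1) * dist y x := by positivity
          have := Real.rpow_le_rpow (abs_nonneg _) (hA ▸ h3) hq0.le
          refine this.trans (le_of_eq ?_)
          rw [Real.mul_rpow (by positivity) dist_nonneg, Real.mul_rpow (by positivity)
            (by positivity), ← Real.rpow_mul hr0]
        refine ENNReal.ofReal_le_ofReal ?_
        rw [div_le_iff₀ (Real.rpow_pos_of_pos hdpos _)]
        calc |r ^ s - e ^ s| ^ q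
            ≤ (s * 2 ^ (1-s)) ^ q * r ^ ((s-1)*q) * (dist y x) ^ q := hnum
          _ = (s * 2 ^ (1-s)) ^ q * r ^ ((s-1)*q) * dist y x ^ (q - s*q - ↑N)
              * dist y x ^ ((N:ℝ) + s*q) := by
            rw [mul_assoc ((s * 2 ^ (1-s)) ^ q * r ^ ((s-1)*q)), ← Real.rpow_add hdpos]
            congr 2
            ring
    · rw [if_neg hd]
      push_neg at hd
      have hdpos : 0 < dist y x := lt_trans (by linarith) hd
      have hnum : |r ^ s - e ^ s| ^ q ≤ r ^ (s*q) := by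
        have h5 : |r ^ s - e ^ s| ≤ r ^ s := by
          rw [hA]
          have : 0 ≤ e ^ s := Real.rpow_nonneg he0 s
          linarith
        have := Real.rpow_le_rpow (abs_nonneg _) h5 hq0.le
        rwa [← Real.rpow_mul hr0] at this
      refine ENNReal.ofReal_le_ofReal ?_
      rw [div_le_iff₀ (Real.rpow_pos_of_pos hdpos _)]
      calc |r ^ s - e ^ s| ^ q ≤ r ^ (s*q) := hnum
        _ = r ^ (s*q) * dist y x ^ (-(N:ℝ) - s*q) * dist y x ^ ((N:ℝ) + s*q) := by
            rw [mul_assoc, ← Real.rpow_add hdpos]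
            have hz : (-(N:ℝ) - s*q) + ((N:ℝ) + s*q) = 0 := by ring
            rw [hz, Real.rpow_zero, mul_one]
  · -- r = 0, hence e = 0
    have hrz : r = 0 := le_antisymm (not_lt.1 hrpos) hr0
    have hez : e = 0 := le_antisymm (hrz ▸ hxy) he0
    rw [G, if_neg hrpos, hrz, hez, sub_self, abs_zero, Real.zero_rpow hq0.ne', zero_div,
      ENNReal.ofReal_zero]

lemma G_measurable (N : ℕ) (s q : ℝ) (Ω : Set (EuclideanSpace ℝ (Fin N))) :
    Measurable fun p : EuclideanSpace ℝ (Fin N) × EuclideanSpace ℝ (Fin N) =>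
      G N s q Ω p.1 p.2 := by
  have hf : Measurable fun p : EuclideanSpace ℝ (Fin N) × EuclideanSpace ℝ (Fin N) =>
      infDist p.1 Ωᶜ := ((continuous_infDist_pt _).comp continuous_fst).measurable
  have hd : Measurable fun p : EuclideanSpace ℝ (Fin N) × EuclideanSpace ℝ (Fin N) =>
      dist p.2 p.1 := (continuous_snd.dist continuous_fst).measurable
  unfold G
  refine Measurable.ite (measurableSet_lt measurable_const hf) ?_ measurable_const
  refine Measurable.ite (measurableSet_le hd (hf.div_const 2)) ?_ ?_
  · exact ((measurable_const.mul (hf.pow measurable_const)).mul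
      (hd.pow measurable_const)).ennreal_ofReal
  · exact ((hf.pow measurable_const).mul (hd.pow measurable_const)).ennreal_ofReal

lemma G_lintegral_bound {N : ℕ} (hN : 0 < N) {s q : ℝ} (hs0 : 0 < s) (hs1 : s < 1)
    (hq : 1 < q) (hsq : s * q < 1) (Ω Ω' : Set (EuclideanSpace ℝ (Fin N))) :
    ∃ D : ENNReal, D ≠ ⊤ ∧ ∀ x : EuclideanSpace ℝ (Fin N),
      ∫⁻ y, G N s q Ω x y ∂(volume.restrict Ω') ≤ D := by
  have hq0 : (0:ℝ) < q := lt_trans one_pos hq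
  have hsq0 : 0 < s * q := mul_pos hs0 hq0
  have ht : -(N:ℝ) < q - s*q - N := by
    have : s * q < q := by nlinarith
    linarith
  have hu : -(N:ℝ) - s*q < -(N:ℝ) := by linarith
  obtain ⟨C₁, hC₁, hC₁b⟩ := lint_ball_le hN ht
  obtain ⟨C₂, hC₂, hC₂b⟩ := lint_compl_le hN hu
  refine ⟨C₁ * ENNReal.ofReal ((s * 2 ^ (1-s)) ^ q * 2 ^ (s*q - q))
      + C₂ * ENNReal.ofReal ((2:ℝ) ^ (s*q)), ?_, fun x => ?_⟩
  · exact ENNReal.add_ne_top.2 ⟨ENNReal.mul_ne_top hC₁ ENNReal.ofReal_ne_top,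
      ENNReal.mul_ne_top hC₂ ENNReal.ofReal_ne_top⟩
  by_cases hx : 0 < infDist x Ωᶜ
  swap
  · have : ∀ y, G N s q Ω x y = 0 := fun y => by rw [G, if_neg hx]
    simp only [this, lintegral_zero]
    exact zero_le
  set r := infDist x Ωᶜ with hr
  have hr2 : 0 < r / 2 := half_pos hx
  calc ∫⁻ y, G N s q Ω x y ∂(volume.restrict Ω')
      ≤ ∫⁻ y, G N s q Ω x y ∂volume := lintegral_mono' Measure.restrict_le_self le_rfl
    _ = (∫⁻ y in closedBall x (r/2), G N s q Ω x y)
        + ∫⁻ y in (closedBall x (r/2))ᶜ, G N s q Ω x y :=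
        (lintegral_add_compl _ measurableSet_closedBall).symm
    _ ≤ C₁ * ENNReal.ofReal ((s * 2 ^ (1-s)) ^ q * 2 ^ (s*q - q))
        + C₂ * ENNReal.ofReal ((2:ℝ) ^ (s*q)) := by
        refine add_le_add ?_ ?_
        · -- near part
          calc ∫⁻ y in closedBall x (r/2), G N s q Ω x y
              ≤ ∫⁻ y in closedBall x (r/2),
                  ENNReal.ofReal ((s * 2 ^ (1-s)) ^ q * r ^ ((s-1)*q))
                    * ENNReal.ofReal (dist y x ^ (q - s*q - N)) := by
                refine setLIntegral_mono' measurableSet_closedBall fun y hy => ?_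
                rw [G, if_pos hx, if_pos (mem_closedBall.1 hy),
                  ENNReal.ofReal_mul (by positivity)]
            _ = ENNReal.ofReal ((s * 2 ^ (1-s)) ^ q * r ^ ((s-1)*q))
                  * ∫⁻ y in closedBall x (r/2), ENNReal.ofReal (dist y x ^ (q - s*q - N)) :=
                lintegral_const_mul' _ _ ENNReal.ofReal_ne_top
            _ ≤ ENNReal.ofReal ((s * 2 ^ (1-s)) ^ q * r ^ ((s-1)*q))
                  * (C₁ * ENNReal.ofReal ((r/2) ^ ((q - s*q - N) + N))) :=
                by gcongr; exact hC₁b x hr2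
            _ = C₁ * ENNReal.ofReal ((s * 2 ^ (1-s)) ^ q * 2 ^ (s*q - q)) := by
                rw [mul_comm (ENNReal.ofReal _), mul_assoc, ← ENNReal.ofReal_mul (by positivity)]
                congr 2
                have he1 : (q - s*q - (N:ℝ)) + N = q - s*q := by ring
                rw [he1, div_eq_mul_inv, Real.mul_rpow (infDist_nonneg) (by norm_num),
                  Real.inv_rpow (by norm_num : (0:ℝ) ≤ 2),
                  ← Real.rpow_neg (by norm_num : (0:ℝ) ≤ 2)]
                have he2 : -(q - s*q) = s*q - q := by ring
                rw [he2]
                calc r ^ (q - s*q) * 2 ^ (s*q - q) * ((s * 2 ^ (1-s)) ^ q * r ^ ((s-1)*q))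
                    = (s * 2 ^ (1-s)) ^ q * (r ^ (q - s*q) * r ^ ((s-1)*q)) * 2 ^ (s*q - q) := by
                      ring
                  _ = (s * 2 ^ (1-s)) ^ q * 2 ^ (s*q - q) := by
                      rw [← Real.rpow_add hx]
                      have : (q - s*q) + (s-1)*q = 0 := by ring
                      rw [this, Real.rpow_zero, mul_one]
        · -- far part
          calc ∫⁻ y in (closedBall x (r/2))ᶜ, G N s q Ω x y
              ≤ ∫⁻ y in (closedBall x (r/2))ᶜ,
                  ENNReal.ofReal (r ^ (s*q))
                    * ENNReal.ofReal (dist y x ^ (-(N:ℝ) - s*q)) := by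
                refine setLIntegral_mono' measurableSet_closedBall.compl fun y hy => ?_
                have hyn : ¬ dist y x ≤ r / 2 := by
                  simpa [mem_closedBall] using hy
                rw [G, if_pos hx, if_neg hyn, ENNReal.ofReal_mul (by positivity)]
            _ = ENNReal.ofReal (r ^ (s*q))
                  * ∫⁻ y in (closedBall x (r/2))ᶜ, ENNReal.ofReal (dist y x ^ (-(N:ℝ) - s*q)) :=
                lintegral_const_mul' _ _ ENNReal.ofReal_ne_top
            _ ≤ ENNReal.ofReal (r ^ (s*q))
                  * (C₂ * ENNReal.ofReal ((r/2) ^ ((-(N:ℝ) - s*q) + N))) :=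
                by gcongr; exact hC₂b x hr2
            _ = C₂ * ENNReal.ofReal ((2:ℝ) ^ (s*q)) := by
                rw [mul_comm (ENNReal.ofReal _), mul_assoc, ← ENNReal.ofReal_mul (by positivity)]
                congr 2
                have he1 : (-(N:ℝ) - s*q) + N = -(s*q) := by ring
                rw [he1, div_eq_mul_inv, Real.mul_rpow (infDist_nonneg) (by norm_num),
                  Real.inv_rpow (by norm_num : (0:ℝ) ≤ 2),
                  ← Real.rpow_neg (by norm_num : (0:ℝ) ≤ 2), neg_neg]
                calc r ^ (-(s*q)) * 2 ^ (s*q) * r ^ (s*q)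
                    = (r ^ (-(s*q)) * r ^ (s*q)) * 2 ^ (s*q) := by ring
                  _ = 2 ^ (s*q) := by
                      rw [← Real.rpow_add hx, neg_add_cancel, Real.rpow_zero, one_mul]

end Stmt18Aux

/-- Finiteness of the Gagliardo `W^{s,q}`-seminorm of `d_Ω^s` when `sq < 1`. -/
theorem stmt18 (N : ℕ) (s q : ℝ) (hs : s ∈ Set.Ioo (0 : ℝ) 1) (hq : 1 < q)
    (hsq : s * q < 1)
    (Ω Ω' : Set (EuclideanSpace ℝ (Fin N)))
    (hΩ : IsOpen Ω) (hb : Bornology.IsBounded Ω)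
    (hΩ' : IsOpen Ω') (hb' : Bornology.IsBounded Ω') (hsub : Ω ⊆ Ω') :
    (∫⁻ p in Ω' ×ˢ Ω',
        ENNReal.ofReal
          (|infDist p.1 Ωᶜ ^ s - infDist p.2 Ωᶜ ^ s| ^ q /
            dist p.1 p.2 ^ ((N : ℝ) + s * q))) < ⊤ := by
  obtain ⟨hs0, hs1⟩ := hs
  have hq0 : (0:ℝ) < q := lt_trans one_pos hq
  rcases Nat.eq_zero_or_pos N with rfl | hN
  · -- trivial case `N = 0`: the space is a single point
    have hsub0 : ∀ a b : EuclideanSpace ℝ (Fin 0), a = b := fun a b =>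
      by ext i; exact i.elim0
    have hzero : ∀ p : EuclideanSpace ℝ (Fin 0) × EuclideanSpace ℝ (Fin 0),
        ENNReal.ofReal
          (|infDist p.1 Ωᶜ ^ s - infDist p.2 Ωᶜ ^ s| ^ q /
            dist p.1 p.2 ^ (((0:ℕ) : ℝ) + s * q)) = 0 := by
      intro p
      rw [hsub0 p.1 p.2, sub_self, abs_zero, Real.zero_rpow hq0.ne', zero_div,
        ENNReal.ofReal_zero]
    have : (∫⁻ p in Ω' ×ˢ Ω',
        ENNReal.ofReal
          (|infDist p.1 Ωᶜ ^ s - infDist p.2 Ωᶜ ^ s| ^ q /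
            dist p.1 p.2 ^ (((0:ℕ) : ℝ) + s * q))) ≤ 0 := by
      refine le_trans (lintegral_mono fun p => le_of_eq (hzero p)) ?_
      simp
    exact lt_of_le_of_lt this ENNReal.zero_lt_top
  · set μ' := (volume : Measure (EuclideanSpace ℝ (Fin N))).restrict Ω' with hμ'
    obtain ⟨D, hD, hDb⟩ := Stmt18Aux.G_lintegral_bound hN hs0 hs1 hq hsq Ω Ω'
    have hGmeas := Stmt18Aux.G_measurable N s q Ω
    have hprod : (volume : Measure
          (EuclideanSpace ℝ (Fin N) × EuclideanSpace ℝ (Fin N))).restrict (Ω' ×ˢ Ω')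
        = μ'.prod μ' := by
      rw [Measure.volume_eq_prod, ← Measure.prod_restrict]
    have hpoint : ∀ p : EuclideanSpace ℝ (Fin N) × EuclideanSpace ℝ (Fin N),
        ENNReal.ofReal
          (|infDist p.1 Ωᶜ ^ s - infDist p.2 Ωᶜ ^ s| ^ q /
            dist p.1 p.2 ^ ((N : ℝ) + s * q))
          ≤ Stmt18Aux.G N s q Ω p.1 p.2 + Stmt18Aux.G N s q Ω p.2 p.1 := by
      intro p
      rcases le_total (infDist p.2 Ωᶜ) (infDist p.1 Ωᶜ) with h | h
      · exact le_trans (Stmt18Aux.pointwise_le hs0 hs1 hq Ω h) le_self_add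
      · have := Stmt18Aux.pointwise_le hs0 hs1 hq Ω (x := p.2) (y := p.1) h
        rw [abs_sub_comm, dist_comm p.2 p.1] at this
        exact le_trans this le_add_self
    have hswap : ∫⁻ p, Stmt18Aux.G N s q Ω p.2 p.1 ∂(μ'.prod μ')
        = ∫⁻ p, Stmt18Aux.G N s q Ω p.1 p.2 ∂(μ'.prod μ') :=
      lintegral_prod_swap (fun p => Stmt18Aux.G N s q Ω p.1 p.2)
    have hone : ∫⁻ p, Stmt18Aux.G N s q Ω p.1 p.2 ∂(μ'.prod μ') ≤ D * volume Ω' := by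
      rw [lintegral_prod _ hGmeas.aemeasurable]
      calc ∫⁻ x, ∫⁻ y, Stmt18Aux.G N s q Ω x y ∂μ' ∂μ'
          ≤ ∫⁻ _, D ∂μ' := lintegral_mono fun x => hDb x
        _ = D * volume Ω' := by rw [lintegral_const, hμ', Measure.restrict_apply_univ]
    have hΩ'fin : volume Ω' < ⊤ := hb'.measure_lt_top
    calc (∫⁻ p in Ω' ×ˢ Ω',
        ENNReal.ofReal
          (|infDist p.1 Ωᶜ ^ s - infDist p.2 Ωᶜ ^ s| ^ q /
            dist p.1 p.2 ^ ((N : ℝ) + s * q)))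
        = ∫⁻ p, ENNReal.ofReal
            (|infDist p.1 Ωᶜ ^ s - infDist p.2 Ωᶜ ^ s| ^ q /
              dist p.1 p.2 ^ ((N : ℝ) + s * q)) ∂(μ'.prod μ') := by rw [← hprod]
      _ ≤ ∫⁻ p, (Stmt18Aux.G N s q Ω p.1 p.2 + Stmt18Aux.G N s q Ω p.2 p.1) ∂(μ'.prod μ') :=
          lintegral_mono hpoint
      _ = (∫⁻ p, Stmt18Aux.G N s q Ω p.1 p.2 ∂(μ'.prod μ'))
            + ∫⁻ p, Stmt18Aux.G N s q Ω p.2 p.1 ∂(μ'.prod μ') :=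
          lintegral_add_left hGmeas _
      _ ≤ D * volume Ω' + D * volume Ω' := by
          rw [hswap]
          exact add_le_add hone hone
      _ < ⊤ := by
          have : D * volume Ω' < ⊤ := ENNReal.mul_lt_top hD.lt_top hΩ'fin
          exact ENNReal.add_lt_top.2 ⟨this, this⟩
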